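/- If the program P is incomplete for the model M (i.e., some atom R(c̄) is in M but not in I(P,M)), then Γ_M ⊢ B is intuitionistically derivable. -/

import Mathlib

namespace ASP

/-- A ground clause `head ← pos, ¬neg` of an answer set program. -/
structure GClause (α : Type) where
  head : α
  pos : List α
  neg : List α

variable {α : Type}

/-- Immediate-consequence operator of the Gelfond–Lifschitz reduct `P^M`:
`F(I) = I ∪ {a | some clause a ← a₁,…,aₙ of P^M has all aᵢ ∈ I}`. -/
def tcons (P : Set (GClause α)) (M : Set α) : Set α →o Set α where
  toFun I := I ∪ {a | ∃ c ∈ P, c.head = a ∧ (∀ b ∈ c.pos, b ∈ I) ∧ (∀ b ∈ c.neg, b ∉ M)}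
  monotone' := by
    intro I J h x hx
    rcases hx with hx | ⟨c, hc, h1, h2, h3⟩
    · exact Or.inl (h hx)
    · exact Or.inr ⟨c, hc, h1, fun b hb => h (h2 b hb), h3⟩

/-- The interpretation `I(P,M)`: least fixed point of the immediate-consequence
operator of the reduct `P^M`. -/
def interp (P : Set (GClause α)) (M : Set α) : Set α := OrderHom.lfp (tcons P M)

/-- `M` is a stable model (answer set) of `P` iff `M = I(P,M)`. -/
def IsStable (P : Set (GClause α)) (M : Set α) : Prop := M = interp P M

end ASP
namespace ASP

/-- Formulas of minimal implicational propositional logic over atoms `α`. -/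
inductive PForm (α : Type) where
  | at_ : α → PForm α
  | imp : PForm α → PForm α → PForm α

/-- Provability in minimal propositional logic (only → introduction/elimination). -/
inductive PPrv {α : Type} : Set (PForm α) → PForm α → Prop
  | ax {Γ : Set (PForm α)} {φ : PForm α} : φ ∈ Γ → PPrv Γ φ
  | impI {Γ : Set (PForm α)} {φ ψ : PForm α} : PPrv (insert φ Γ) ψ → PPrv Γ (.imp φ ψ)
  | impE {Γ : Set (PForm α)} {φ ψ : PForm α} : PPrv Γ (.imp φ ψ) → PPrv Γ φ → PPrv Γ ψ

end ASP
namespace TR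

/-- A ground atom `R(c̄)`: predicate index plus constant arguments. -/
structure GA where
  pred : ℕ
  args : List ℕ
deriving DecidableEq

/-- Atom alphabet of the translated formula φ: for every program predicate `R`
there are `R`, `R̄`, `R!`, `R?`; pair predicates `RP`; clause predicates `K⁰`
and nullary `K̄⁰`; and the nullary `•, ∘, A, B, ⊙`. -/
inductive At where
  | pos : GA → At
  | bar : GA → At
  | bang : GA → At
  | quest : GA → At
  | mem : GA → GA → At
  | k : ℕ → List ℕ → At
  | kbar : ℕ → At
  | bullet : At
  | circ : At
  | unsound : At
  | incomplete : At
  | lup : At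
deriving DecidableEq

abbrev F := ASP.PForm At

def av (a : At) : F := .at_ a

def imps (l : List F) (t : F) : F := l.foldr ASP.PForm.imp t

/-- Axioms (1): `(R(c̄)→⊙) → (R̄(c̄)→⊙) → ⊙`. -/
def ax1 (B : Set GA) : Set F :=
  {f | ∃ a ∈ B, f = .imp (.imp (av (.pos a)) (av .lup)) (.imp (.imp (av (.bar a)) (av .lup)) (av .lup))}

/-- Axioms (2): `Ω→⊙`, `A→⊙`, `B→⊙`. -/
def ax2 (ω : GA) : Set F :=
  {.imp (av (.pos ω)) (av .lup), .imp (av .unsound) (av .lup), .imp (av .incomplete) (av .lup)}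

/-- Axioms (3): `R̄(c̄) → (R!(c̄)→•) → A`. -/
def ax3 (B : Set GA) : Set F :=
  {f | ∃ a ∈ B, f = .imp (av (.bar a)) (.imp (.imp (av (.bang a)) (av .bullet)) (av .unsound))}

/-- Axioms (4): `R(c̄) → (R?(c̄)→∘) → B`. -/
def ax4 (B : Set GA) : Set F :=
  {f | ∃ a ∈ B, f = .imp (av (.pos a)) (.imp (.imp (av (.quest a)) (av .circ)) (av .incomplete))}

/-- Axiom (5) for a ground clause `R(ē) ← P₁(c̄₁),…,P_r(c̄_r), ¬S₁(d̄₁),…,¬S_s(d̄_s)`: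
`R!(ē) → (P₁!(c̄₁)→•) → ⋯ → (P_r!(c̄_r)→•) → S̄₁(d̄₁) → ⋯ → S̄_s(d̄_s) → •`. -/
def clax (c : ASP.GClause GA) : F :=
  .imp (av (.bang c.head))
    (imps (c.pos.map (fun b => .imp (av (.bang b)) (av .bullet)) ++
           c.neg.map (fun s => av (.bar s))) (av .bullet))

def ax5 (Pg : List (ASP.GClause GA)) : Set F := {f | ∃ c ∈ Pg, f = clax c}

/-- Axioms (6): `R?(c̄) → (K⁰₁(c̄)→K̄⁰₁) → ⋯ → (K⁰_l(c̄)→K̄⁰_l) → ∘`,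
where K₁,…,K_l are all clauses whose target predicate is that of the atom. -/
def ax6 (Pg : List (ASP.GClause GA)) (B : Set GA) : Set F :=
  {f | ∃ a ∈ B, f = .imp (av (.quest a))
    (imps (((Pg.zipIdx.map Prod.swap).filter (fun jc => jc.2.head.pred == a.pred)).map
      (fun jc => ASP.PForm.imp (av (.k jc.1 a.args)) (av (.kbar jc.1)))) (av .circ))}

/-- Axioms (7)-(8): a mismatch between the queried arguments and the clause head
arguments immediately yields `K⁰(c̄) → K̄⁰`. -/
def ax7 (Pg : List (ASP.GClause GA)) (B : Set GA) : Set F :=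
  {f | ∃ jc ∈ (Pg.zipIdx.map Prod.swap), ∃ a ∈ B, a.pred = jc.2.head.pred ∧ a.args ≠ jc.2.head.args ∧
    f = .imp (av (.k jc.1 a.args)) (av (.kbar jc.1))}

/-- Axioms (10): `K⁰(ē) → (P?(c̄) → RP(ē,c̄) → ∘) → K̄⁰`, for each positive body atom. -/
def ax10 (Pg : List (ASP.GClause GA)) : Set F :=
  {f | ∃ jc ∈ (Pg.zipIdx.map Prod.swap), ∃ b ∈ jc.2.pos, f = .imp (av (.k jc.1 jc.2.head.args))
    (.imp (.imp (av (.quest b)) (.imp (av (.mem jc.2.head b)) (av .circ))) (av (.kbar jc.1)))}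

/-- Axioms (11): `K⁰(ē) → S(d̄) → K̄⁰`, for each negative body atom `¬S(d̄)`. -/
def ax11 (Pg : List (ASP.GClause GA)) : Set F :=
  {f | ∃ jc ∈ (Pg.zipIdx.map Prod.swap), ∃ s ∈ jc.2.neg, f = .imp (av (.k jc.1 jc.2.head.args))
    (.imp (av (.pos s)) (av (.kbar jc.1)))}

/-- Axioms (12): transitivity `RP(ā,b̄) → PQ(b̄,c̄) → (RQ(ā,c̄)→∘) → ∘`. -/
def ax12 (B : Set GA) : Set F :=
  {f | ∃ a ∈ B, ∃ b ∈ B, ∃ c ∈ B, f = .imp (av (.mem a b)) (.imp (av (.mem b c))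
    (.imp (.imp (av (.mem a c)) (av .circ)) (av .circ)))}

/-- Axioms (13): loop detection `PP(ā,ā) → ∘`. -/
def ax13 (B : Set GA) : Set F := {f | ∃ a ∈ B, f = .imp (av (.mem a a)) (av .circ)}

/-- All axioms of the translated formula φ. -/
def Axioms (Pg : List (ASP.GClause GA)) (B : Set GA) (ω : GA) : Set F :=
  ax1 B ∪ ax2 ω ∪ ax3 B ∪ ax4 B ∪ ax5 Pg ∪ ax6 Pg B ∪ ax7 Pg B ∪
    ax10 Pg ∪ ax11 Pg ∪ ax12 B ∪ ax13 B

/-- `Γ_M`: the union of `M ∪ M̄` with the axioms of φ. -/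
def GammaM (Pg : List (ASP.GClause GA)) (B : Set GA) (ω : GA) (M : Set GA) : Set F :=
  Axioms Pg B ω ∪ {f | ∃ a ∈ M, f = av (.pos a)} ∪ {f | ∃ a ∈ B, a ∉ M ∧ f = av (.bar a)}

/-- The implicational formula of a clause of `P̄` (negative atoms replaced by barred ones). -/
def cbarF (c : ASP.GClause GA) : F :=
  imps (c.pos.map (fun b => av (.pos b)) ++ c.neg.map (fun s => av (.bar s))) (av (.pos c.head))

/-- The environment `P̄ ∪ M̄`. -/
def PbarMbar (Pg : List (ASP.GClause GA)) (B : Set GA) (M : Set GA) : Set F :=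
  {f | ∃ c ∈ Pg, f = cbarF c} ∪ {f | ∃ a ∈ B, a ∉ M ∧ f = av (.bar a)}

def progSet (Pg : List (ASP.GClause GA)) : Set (ASP.GClause GA) := {c | c ∈ Pg}

/-- All atoms of the program lie in the Herbrand base `B`. -/
def WfProg (Pg : List (ASP.GClause GA)) (B : Set GA) : Prop :=
  ∀ c ∈ Pg, c.head ∈ B ∧ (∀ b ∈ c.pos, b ∈ B) ∧ (∀ s ∈ c.neg, s ∈ B)

end TR

namespace TR

open ASP

/- ### Auxiliary lemmas -/

lemma pprv_weaken {Γ Γ' : Set F} {φ : F} (h : PPrv Γ φ) (hs : Γ ⊆ Γ') : PPrv Γ' φ := by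
  induction h generalizing Γ' with
  | ax h => exact .ax (hs h)
  | impI _ ih => exact .impI (ih (Set.insert_subset_insert hs))
  | impE _ _ ih1 ih2 => exact .impE (ih1 hs) (ih2 hs)

lemma pprv_imps_elim {Γ : Set F} {l : List F} {t : F}
    (h : PPrv Γ (imps l t)) (hl : ∀ f ∈ l, PPrv Γ f) : PPrv Γ t := by
  induction l with
  | nil => exact h
  | cons f l ih =>
      exact ih (h.impE (hl f List.mem_cons_self)) (fun g hg => hl g (List.mem_cons_of_mem _ hg))

lemma snd_mem_of_mem_enum {l : List (ASP.GClause GA)} {jc : ℕ × ASP.GClause GA}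
    (h : jc ∈ l.zipIdx.map Prod.swap) : jc.2 ∈ l := by
  obtain ⟨x, hx, rfl⟩ := List.mem_map.1 h
  exact List.fst_mem_of_mem_zipIdx hx

lemma ax_sub_gamma {Pg : List (ASP.GClause GA)} {B : Set GA} {ω : GA} {M : Set GA} :
    Axioms Pg B ω ⊆ GammaM Pg B ω M := fun f hf => Or.inl (Or.inl hf)

lemma ax4_sub {Pg : List (ASP.GClause GA)} {B : Set GA} {ω : GA} :
    ax4 B ⊆ Axioms Pg B ω := by
  intro f hf; unfold Axioms; simp only [Set.mem_union]; tauto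

lemma ax6_sub {Pg : List (ASP.GClause GA)} {B : Set GA} {ω : GA} :
    ax6 Pg B ⊆ Axioms Pg B ω := by
  intro f hf; unfold Axioms; simp only [Set.mem_union]; tauto

lemma ax7_sub {Pg : List (ASP.GClause GA)} {B : Set GA} {ω : GA} :
    ax7 Pg B ⊆ Axioms Pg B ω := by
  intro f hf; unfold Axioms; simp only [Set.mem_union]; tauto

lemma ax10_sub {Pg : List (ASP.GClause GA)} {B : Set GA} {ω : GA} :
    ax10 Pg ⊆ Axioms Pg B ω := by
  intro f hf; unfold Axioms; simp only [Set.mem_union]; tauto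

lemma ax11_sub {Pg : List (ASP.GClause GA)} {B : Set GA} {ω : GA} :
    ax11 Pg ⊆ Axioms Pg B ω := by
  intro f hf; unfold Axioms; simp only [Set.mem_union]; tauto

lemma ax12_sub {Pg : List (ASP.GClause GA)} {B : Set GA} {ω : GA} :
    ax12 B ⊆ Axioms Pg B ω := by
  intro f hf; unfold Axioms; simp only [Set.mem_union]; tauto

lemma ax13_sub {Pg : List (ASP.GClause GA)} {B : Set GA} {ω : GA} :
    ax13 B ⊆ Axioms Pg B ω := by
  intro f hf; unfold Axioms; simp only [Set.mem_union]; tauto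

lemma pos_mem_gamma {Pg : List (ASP.GClause GA)} {B : Set GA} {ω : GA} {M : Set GA}
    {a : GA} (ha : a ∈ M) : av (.pos a) ∈ GammaM Pg B ω M :=
  Or.inl (Or.inr ⟨a, ha, rfl⟩)

/-- Semantic key fact: if `a ∉ I(P,M)` then every clause with head `a` fails. -/
lemma not_interp_clause {Pg : List (ASP.GClause GA)} {M : Set GA} {a : GA}
    (ha : a ∉ ASP.interp (progSet Pg) M) {c : ASP.GClause GA}
    (hc : c ∈ Pg) (hh : c.head = a) :
    (∃ s ∈ c.neg, s ∈ M) ∨ (∃ b ∈ c.pos, b ∉ ASP.interp (progSet Pg) M) := by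
  by_contra hcon
  push_neg at hcon
  obtain ⟨h1, h2⟩ := hcon
  apply ha
  have : a ∈ (ASP.tcons (progSet Pg) M) (ASP.interp (progSet Pg) M) :=
    Or.inr ⟨c, hc, hh, h2, h1⟩
  rwa [ASP.interp, OrderHom.map_lfp] at this

/-- Extend the `mem` chain across a new atom using transitivity axioms. -/
lemma extend_mems {B : Set GA} (a b : GA) (ha : a ∈ B) (hb : b ∈ B) :
    ∀ (S : Finset GA), (∀ x ∈ S, x ∈ B) →
    ∀ (Δ : Set F), ax12 B ⊆ Δ → (∀ x ∈ S, av (.mem x a) ∈ Δ) → av (.mem a b) ∈ Δ →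
    (∀ Δ' : Set F, Δ ⊆ Δ' → (∀ x ∈ S, av (.mem x b) ∈ Δ') → PPrv Δ' (av .circ)) →
    PPrv Δ (av .circ) := by
  intro S
  induction S using Finset.induction_on with
  | empty =>
      intro _ Δ _ _ _ hcont
      exact hcont Δ subset_rfl (by simp)
  | @insert x S hx ih =>
      intro hSB Δ h12 hmem hab hcont
      have hxB : x ∈ B := hSB x (Finset.mem_insert_self _ _)
      have hax : PPrv Δ (.imp (av (.mem x a)) (.imp (av (.mem a b))
          (.imp (.imp (av (.mem x b)) (av .circ)) (av .circ)))) :=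
        .ax (h12 ⟨x, hxB, a, ha, b, hb, rfl⟩)
      refine .impE (.impE (.impE hax (.ax (hmem x (Finset.mem_insert_self _ _)))) (.ax hab)) ?_
      refine .impI ?_
      refine ih (fun y hy => hSB y (Finset.mem_insert_of_mem hy))
        (insert (av (.mem x b)) Δ)
        (fun f hf => Set.mem_insert_of_mem _ (h12 hf))
        (fun y hy => Set.mem_insert_of_mem _ (hmem y (Finset.mem_insert_of_mem hy)))
        (Set.mem_insert_of_mem _ hab) ?_
      intro Δ' hsub hmem'
      refine hcont Δ' (fun f hf => hsub (Set.mem_insert_of_mem _ hf)) ?_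
      intro y hy
      rcases Finset.mem_insert.1 hy with rfl | hy
      · exact hsub (Set.mem_insert _ _)
      · exact hmem' y hy

def bodyAtoms (Pg : List (ASP.GClause GA)) : Finset GA :=
  (Pg.flatMap fun c => c.pos).toFinset

/-- Main lemma: from `a ∉ I(P,M)` derive `∘` in any context containing `Γ_M`,
`a?`, and chain facts for the ancestor set `L`. -/
lemma circ_of_not_interp (Pg : List (ASP.GClause GA)) (B : Set GA) (ω : GA) (M : Set GA)
    (hW : WfProg Pg B) :
    ∀ n : ℕ, ∀ (L : Finset GA) (a : GA) (Δ : Set F),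
      GammaM Pg B ω M ⊆ Δ → av (.quest a) ∈ Δ → (∀ x ∈ L, av (.mem x a) ∈ Δ) →
      a ∈ B → (∀ x ∈ L, x ∈ B) → a ∉ L →
      a ∉ ASP.interp (progSet Pg) M →
      ((bodyAtoms Pg) \ insert a L).card < n →
      PPrv Δ (av .circ) := by
  intro n
  induction n using Nat.strong_induction_on with
  | _ n IH =>
  intro L a Δ hΓ hq hmemL haB hLB haL haI hcard
  have h12 : ax12 B ⊆ Δ := fun f hf => hΓ (ax_sub_gamma (ax12_sub hf))
  -- apply axiom (6)
  have hax6 : PPrv Δ (.imp (av (.quest a))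
      (imps (((Pg.zipIdx.map Prod.swap).filter (fun jc => jc.2.head.pred == a.pred)).map
        (fun jc => ASP.PForm.imp (av (.k jc.1 a.args)) (av (.kbar jc.1)))) (av .circ))) :=
    .ax (hΓ (ax_sub_gamma (ax6_sub ⟨a, haB, rfl⟩)))
  refine pprv_imps_elim (hax6.impE (.ax hq)) ?_
  intro f hf
  obtain ⟨jc, hjc, rfl⟩ := List.mem_map.1 hf
  obtain ⟨hjcE, hpred⟩ := List.mem_filter.1 hjc
  have hpred' : jc.2.head.pred = a.pred := by simpa using hpred
  have hcmem : jc.2 ∈ Pg := snd_mem_of_mem_enum hjcE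
  by_cases hargs : jc.2.head.args = a.args
  · -- head equals a
    have hhead : jc.2.head = a := by
      obtain ⟨p, ar⟩ := a
      cases h : jc.2.head with
      | mk p' ar' => simp_all
    rcases not_interp_clause haI hcmem hhead with ⟨s, hs, hsM⟩ | ⟨b, hb, hbI⟩
    · -- negative body atom in M : axiom (11)
      have hax11 : PPrv Δ (.imp (av (.k jc.1 jc.2.head.args))
          (.imp (av (.pos s)) (av (.kbar jc.1)))) :=
        .ax (hΓ (ax_sub_gamma (ax11_sub ⟨jc, hjcE, s, hs, rfl⟩)))
      rw [hhead] at hax11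
      exact .impI (.impE (.impE (pprv_weaken hax11 (Set.subset_insert _ _))
        (.ax (Set.mem_insert _ _)))
        (.ax (Set.mem_insert_of_mem _ (hΓ (pos_mem_gamma hsM)))))
    · -- positive body atom not in interp : axiom (10)
      have hbB : b ∈ B := (hW jc.2 hcmem).2.1 b hb
      have hax10 : PPrv Δ (.imp (av (.k jc.1 jc.2.head.args))
          (.imp (.imp (av (.quest b)) (.imp (av (.mem jc.2.head b)) (av .circ)))
            (av (.kbar jc.1)))) :=
        .ax (hΓ (ax_sub_gamma (ax10_sub ⟨jc, hjcE, b, hb, rfl⟩)))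
      rw [hhead] at hax10
      refine .impI ?_
      set Δ1 : Set F := insert (av (.k jc.1 a.args)) Δ with hΔ1
      refine .impE (.impE (pprv_weaken hax10 (Set.subset_insert _ _))
        (.ax (Set.mem_insert _ _))) ?_
      refine .impI (.impI ?_)
      set Δ3 : Set F := insert (av (.mem a b)) (insert (av (.quest b)) Δ1) with hΔ3
      have hΔΔ3 : Δ ⊆ Δ3 := by
        intro f hf
        exact Set.mem_insert_of_mem _ (Set.mem_insert_of_mem _ (Set.mem_insert_of_mem _ hf))
      have hmemab : av (.mem a b) ∈ Δ3 := Set.mem_insert _ _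
      have hqb : av (.quest b) ∈ Δ3 := Set.mem_insert_of_mem _ (Set.mem_insert _ _)
      have h13 : ∀ c ∈ B, PPrv Δ3 (.imp (av (.mem c c)) (av .circ)) := by
        intro c hc
        exact .ax (hΔΔ3 (hΓ (ax_sub_gamma (ax13_sub ⟨c, hc, rfl⟩))))
      by_cases hba : b = a
      · subst hba
        exact .impE (h13 b hbB) (.ax hmemab)
      by_cases hbL : b ∈ L
      · -- loop via transitivity: mem b a and mem a b give mem b b
        have hax12 : PPrv Δ3 (.imp (av (.mem b a)) (.imp (av (.mem a b))
            (.imp (.imp (av (.mem b b)) (av .circ)) (av .circ)))) :=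
          .ax (hΔΔ3 (h12 ⟨b, hbB, a, haB, b, hbB, rfl⟩))
        exact .impE (.impE (.impE hax12 (.ax (hΔΔ3 (hmemL b hbL)))) (.ax hmemab))
          (.impI (.impE (pprv_weaken (h13 b hbB) (Set.subset_insert _ _))
            (.ax (Set.mem_insert _ _))))
      · -- recurse
        refine extend_mems a b haB hbB L hLB Δ3 (fun f hf => hΔΔ3 (h12 hf))
          (fun x hx => hΔΔ3 (hmemL x hx)) hmemab ?_
        intro Δ' hsub hmem'
        have hbody : b ∈ bodyAtoms Pg := by
          simp only [bodyAtoms, List.mem_toFinset, List.mem_flatMap]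
          exact ⟨jc.2, hcmem, hb⟩
        have hbD : b ∈ bodyAtoms Pg \ insert a L := by
          simp only [Finset.mem_sdiff, Finset.mem_insert]
          exact ⟨hbody, by tauto⟩
        have hm : (bodyAtoms Pg \ insert a L).card < n := hcard
        refine IH ((bodyAtoms Pg) \ insert a L).card hm (insert a L) b Δ'
          (fun f hf => hsub (hΔΔ3 (hΓ hf))) (hsub hqb) ?_ hbB ?_ ?_ hbI ?_
        · intro x hx
          rcases Finset.mem_insert.1 hx with rfl | hx
          · exact hsub hmemab
          · exact hmem' x hx
        · intro x hx
          rcases Finset.mem_insert.1 hx with rfl | hx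
          · exact haB
          · exact hLB x hx
        · simp only [Finset.mem_insert]; tauto
        · calc (bodyAtoms Pg \ insert b (insert a L)).card
              = ((bodyAtoms Pg \ insert a L).erase b).card := by
                rw [Finset.sdiff_insert]
            _ < (bodyAtoms Pg \ insert a L).card := Finset.card_erase_lt_of_mem hbD
  · -- argument mismatch : axiom (7)
    exact .ax (hΓ (ax_sub_gamma (ax7_sub
      ⟨jc, hjcE, a, haB, hpred'.symm, fun h => hargs h.symm, rfl⟩)))

end TR

/-- If P is incomplete for M (some atom is in M but not in I(P,M)) then
`Γ_M ⊢ B` is derivable. -/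
theorem stmt10 (Pg : List (ASP.GClause TR.GA)) (B : Set TR.GA) (ω : TR.GA)
    (M : Set TR.GA) (hW : TR.WfProg Pg B) (hM : M ⊆ B)
    (h : ∃ a ∈ M, a ∉ ASP.interp (TR.progSet Pg) M) :
    ASP.PPrv (TR.GammaM Pg B ω M) (TR.av .incomplete) := by
  obtain ⟨a, haM, haI⟩ := h
  have haB : a ∈ B := hM haM
  have hax4 : ASP.PPrv (TR.GammaM Pg B ω M) (.imp (TR.av (.pos a))
      (.imp (.imp (TR.av (.quest a)) (TR.av .circ)) (TR.av .incomplete))) :=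
    .ax (TR.ax_sub_gamma (TR.ax4_sub ⟨a, haB, rfl⟩))
  refine .impE (.impE hax4 (.ax (TR.pos_mem_gamma haM))) (.impI ?_)
  exact TR.circ_of_not_interp Pg B ω M hW ((TR.bodyAtoms Pg \ insert a ∅).card + 1)
    ∅ a _ (Set.subset_insert _ _) (Set.mem_insert _ _) (by simp) haB (by simp) (by simp)
    haI (Nat.lt_succ_self _)
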